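/- If a unit vector ψ ∈ ℂ^{2^n} is prepared by Clifford gates plus at most t Pauli-rotation gates, then the number of indices i ∈ [n] for which some element of stab(ψ) acts non-trivially on qubit i (i.e. some P = i^ℓ·Q_1⊗⋯⊗Q_n ∈ stab(ψ) has Q_i ≠ I) is at least n − t. -/

import Mathlib

set_option synthInstance.maxHeartbeats 1000000
set_option maxHeartbeats 1000000


open Matrix

noncomputable section

/-- The space of `n`-qubit operators (2^n × 2^n complex matrices, indexed by bit strings). -/
abbrev QMat (n : ℕ) := Matrix (Fin n → Fin 2) (Fin n → Fin 2) ℂ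

/-- The space of `n`-qubit state vectors (ℂ^{2^n}, indexed by bit strings). -/
abbrev QVec (n : ℕ) := (Fin n → Fin 2) → ℂ

def PauliX : Matrix (Fin 2) (Fin 2) ℂ := !![0, 1; 1, 0]
def PauliY : Matrix (Fin 2) (Fin 2) ℂ := !![0, -Complex.I; Complex.I, 0]
def PauliZ : Matrix (Fin 2) (Fin 2) ℂ := !![1, 0; 0, -1]

/-- `Q` is one of the four single-qubit Pauli matrices `I, X, Y, Z`. -/
def IsSingleQubitPauli (Q : Matrix (Fin 2) (Fin 2) ℂ) : Prop :=
  Q = 1 ∨ Q = PauliX ∨ Q = PauliY ∨ Q = PauliZ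

/-- Kronecker product, in qubit order, of `n` single-qubit operators. -/
def tensorn (n : ℕ) (Q : Fin n → Matrix (Fin 2) (Fin 2) ℂ) : QMat n :=
  fun x y => ∏ j, Q j (x j) (y j)

/-- `P` is an element of the `n`-qubit Pauli group: `P = i^ℓ · Q_1 ⊗ ⋯ ⊗ Q_n`. -/
def IsPauli {n : ℕ} (P : QMat n) : Prop :=
  ∃ (ℓ : Fin 4) (Q : Fin n → Matrix (Fin 2) (Fin 2) ℂ),
    (∀ j, IsSingleQubitPauli (Q j)) ∧ P = (Complex.I ^ (ℓ : ℕ)) • tensorn n Q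

/-- Member of the `n`-qubit Clifford group: a unitary mapping Pauli operators to
Pauli operators under conjugation. -/
def IsClifford {n : ℕ} (U : QMat n) : Prop :=
  U ∈ Matrix.unitaryGroup (Fin n → Fin 2) ℂ ∧ ∀ P : QMat n, IsPauli P → IsPauli (U * P * Uᴴ)

/-- A Pauli-rotation gate `exp(iθP)` with `θ ∈ ℝ` and `P` a Pauli operator. -/
def IsPauliRotation {n : ℕ} (R : QMat n) : Prop :=
  ∃ (θ : ℝ) (P : QMat n), IsPauli P ∧ R = NormedSpace.exp (((θ : ℂ) * Complex.I) • P)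

/-- The first standard basis vector `e₀` of ℂ^{2^n} (the all-zeros bit string). -/
def e0 (n : ℕ) : QVec n := fun x => if x = (fun _ => 0) then 1 else 0

/-- `ψ = C_s R_s ⋯ C_1 R_1 C_0 e₀` for some `s ≤ t`, where each `C_j` is Clifford and
each `R_j` is a Pauli-rotation gate: `ψ` is prepared by Clifford gates plus at most `t`
Pauli-rotation gates. -/
def PreparedBy {n : ℕ} (t : ℕ) (ψ : QVec n) : Prop :=
  ∃ s : ℕ, s ≤ t ∧ ∃ (C R : ℕ → QMat n) (v : ℕ → QVec n),
    (∀ j, j ≤ s → IsClifford (C j)) ∧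
    (∀ j, 1 ≤ j → j ≤ s → IsPauliRotation (R j)) ∧
    v 0 = (C 0) *ᵥ (e0 n) ∧
    (∀ j, j < s → v (j + 1) = (C (j + 1)) *ᵥ ((R (j + 1)) *ᵥ v j)) ∧
    ψ = v s


/-- sign character on ZMod 2 -/
def chi (v : ZMod 2) : ℂ := if v = 0 then 1 else -1

lemma zmod2_cases : ∀ v : ZMod 2, v = 0 ∨ v = 1 := by decide

lemma two_eq_zero' : (2 : ZMod 2) = 0 := by decide
lemma three_eq_one' : (3 : ZMod 2) = 1 := by decide

lemma chi_add (u v : ZMod 2) : chi (u + v) = chi u * chi v := by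
  have h11 : (1 + 1 : ZMod 2) = 0 := by decide
  rcases zmod2_cases u with h | h <;> rcases zmod2_cases v with h' | h' <;>
    simp [h, h', h11, chi]

lemma chi_ne_zero (v : ZMod 2) : chi v ≠ 0 := by
  rcases zmod2_cases v with h | h <;> simp [h, chi]

lemma chi_inj {u v : ZMod 2} (h : chi u = chi v) : u = v := by
  rcases zmod2_cases u with h1 | h1 <;> rcases zmod2_cases v with h2 | h2 <;>
    simp_all [chi] <;> norm_num at h

lemma chi_sum {ι : Type*} (s : Finset ι) (f : ι → ZMod 2) :
    ∏ j ∈ s, chi (f j) = chi (∑ j ∈ s, f j) := by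
  classical
  induction s using Finset.cons_induction with
  | empty => simp [chi]
  | cons a s ha ih => rw [Finset.prod_cons, Finset.sum_cons, ih, chi_add]

lemma chi_eq_I_pow (v : ZMod 2) : chi v = Complex.I ^ (2 * v.val) := by
  rcases zmod2_cases v with h | h <;>
    simp [h, chi, pow_succ, Complex.I_mul_I, ZMod.val_one]

/-- the Fin 2 index as an element of ZMod 2 -/
def vF (a : Fin 2) : ZMod 2 := (a.val : ZMod 2)

lemma vF_inj : Function.Injective vF := by decide

/-- unsigned single-qubit Pauli X^x Z^z -/
def sPauli (x z : ZMod 2) : Matrix (Fin 2) (Fin 2) ℂ :=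
  fun a b => if vF a = vF b + x then chi (z * vF b) else 0

lemma sPauli_mul (x z x' z' : ZMod 2) :
    sPauli x z * sPauli x' z' = chi (z * x') • sPauli (x + x') (z + z') := by
  ext a b
  rcases zmod2_cases x with h1 | h1 <;> rcases zmod2_cases z with h2 | h2 <;>
  rcases zmod2_cases x' with h3 | h3 <;> rcases zmod2_cases z' with h4 | h4 <;>
  subst h1 h2 h3 h4 <;> fin_cases a <;> fin_cases b <;>
    simp [sPauli, chi, vF, Matrix.mul_apply, Fin.sum_univ_two, two_eq_zero', three_eq_one'] <;> norm_num <;> simp [two_eq_zero', three_eq_one', chi]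

lemma sPauli_one : sPauli 0 0 = 1 := by
  ext a b
  fin_cases a <;> fin_cases b <;> simp [sPauli, chi, vF, Matrix.one_apply, two_eq_zero', three_eq_one']

lemma tensorn_mul {n : ℕ} (Q Q' : Fin n → Matrix (Fin 2) (Fin 2) ℂ) :
    tensorn n Q * tensorn n Q' = tensorn n (fun j => Q j * Q' j) := by
  ext x y
  simp only [tensorn, Matrix.mul_apply]
  rw [show (∏ j, ∑ c, Q j (x j) c * Q' j c (y j)) =
      ∑ k ∈ Fintype.piFinset (fun _ : Fin n => (Finset.univ : Finset (Fin 2))),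
        ∏ j, Q j (x j) (k j) * Q' j (k j) (y j) from
    Finset.prod_univ_sum _ _]
  rw [Fintype.piFinset_univ]
  exact (Finset.sum_congr rfl (fun k _ => by rw [Finset.prod_mul_distrib])).symm

lemma tensorn_smul {n : ℕ} (c : Fin n → ℂ) (Q : Fin n → Matrix (Fin 2) (Fin 2) ℂ) :
    tensorn n (fun j => c j • Q j) = (∏ j, c j) • tensorn n Q := by
  ext x y
  simp [tensorn, Finset.prod_mul_distrib, Matrix.smul_apply, smul_eq_mul]

lemma tensorn_one {n : ℕ} : tensorn n (fun _ => (1 : Matrix (Fin 2) (Fin 2) ℂ)) = 1 := by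
  ext x y
  by_cases h : x = y
  · subst h; simp [tensorn, Matrix.one_apply]
  · have : ∃ j, x j ≠ y j := by
      by_contra hc
      push_neg at hc
      exact h (funext hc)
    obtain ⟨j, hj⟩ := this
    rw [Matrix.one_apply_ne h]
    exact Finset.prod_eq_zero (Finset.mem_univ j) (by simp [Matrix.one_apply, hj])

/-- symplectic vectors -/
abbrev PV (n : ℕ) := (Fin n → ZMod 2) × (Fin n → ZMod 2)

/-- the unsigned Pauli word attached to a symplectic vector -/
def PW {n : ℕ} (a : PV n) : QMat n := tensorn n (fun j => sPauli (a.1 j) (a.2 j))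

/-- the "sign exponent" in the product rule -/
def beta {n : ℕ} (a b : PV n) : ZMod 2 := ∑ j, a.2 j * b.1 j

lemma PW_mul {n : ℕ} (a b : PV n) : PW a * PW b = chi (beta a b) • PW (a + b) := by
  rw [PW, PW, tensorn_mul]
  have : (fun j => sPauli (a.1 j) (a.2 j) * sPauli (b.1 j) (b.2 j)) =
      (fun j => chi (a.2 j * b.1 j) • sPauli ((a + b).1 j) ((a + b).2 j)) := by
    funext j; rw [sPauli_mul]; rfl
  rw [this, tensorn_smul, chi_sum]
  rfl

lemma PW_zero {n : ℕ} : PW (0 : PV n) = 1 := by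
  rw [PW]
  have : (fun j : Fin n => sPauli ((0 : PV n).1 j) ((0 : PV n).2 j)) =
      fun _ : Fin n => (1 : Matrix (Fin 2) (Fin 2) ℂ) := by
    funext j; simpa using sPauli_one
  rw [this, tensorn_one]

lemma PW_apply_eq {n : ℕ} (a : PV n) (x y : Fin n → Fin 2)
    (hx : ∀ j, vF (x j) = vF (y j) + a.1 j) :
    PW a x y = chi (∑ j, a.2 j * vF (y j)) := by
  rw [PW, tensorn, ← chi_sum]
  exact Finset.prod_congr rfl (fun j _ => by simp only [sPauli]; rw [if_pos (hx j)])

lemma PW_apply_ne {n : ℕ} (a : PV n) (x y : Fin n → Fin 2) (j : Fin n)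
    (hj : vF (x j) ≠ vF (y j) + a.1 j) : PW a x y = 0 := by
  rw [PW, tensorn]
  exact Finset.prod_eq_zero (Finset.mem_univ j) (by simp only [sPauli]; rw [if_neg hj])

/-- Fin 2 representative of a ZMod 2 element -/
def toF (v : ZMod 2) : Fin 2 := if v = 0 then 0 else 1

@[simp] lemma vF_toF : ∀ v, vF (toF v) = v := by decide
@[simp] lemma vF_zero : vF 0 = 0 := by decide

lemma PW_smul_inj {n : ℕ} {a b : PV n} {c d : ℂ} (hc : c ≠ 0)
    (h : c • PW a = d • PW b) : a = b ∧ c = d := by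
  have key : ∀ (y x : Fin n → Fin 2), c * PW a x y = d * PW b x y := by
    intro y x
    have := congrFun (congrFun h x) y
    simpa [Matrix.smul_apply, smul_eq_mul] using this
  -- first components agree
  have h1 : a.1 = b.1 := by
    funext j
    by_contra hj
    have hx := key (fun _ => 0) (fun k => toF (a.1 k))
    rw [PW_apply_eq a _ _ (fun k => by simp),
        PW_apply_ne b _ _ j (by simpa using hj)] at hx
    simp [vF_zero] at hx
    exact hc (by simpa [chi_ne_zero] using hx)
  -- with y = 0 get c = d
  have hc' : c = d := by
    have hx := key (fun _ => 0) (fun k => toF (a.1 k))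
    rw [PW_apply_eq a _ _ (fun k => by simp),
        PW_apply_eq b _ _ (fun k => by simp [h1])] at hx
    simpa [chi] using hx
  subst hc'
  refine ⟨Prod.ext h1 ?_, rfl⟩
  funext j
  -- use y = delta_j
  have hx := key (fun k => if k = j then 1 else 0)
      (fun k => toF (vF (if k = j then 1 else 0) + a.1 k))
  rw [PW_apply_eq a _ _ (fun k => by simp),
      PW_apply_eq b _ _ (fun k => by simp [h1])] at hx
  have hsum : ∀ z : Fin n → ZMod 2,
      (∑ k, z k * vF (if k = j then (1 : Fin 2) else 0)) = z j := by
    intro z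
    rw [Finset.sum_eq_single j]
    · simp [vF]
    · intro k _ hk; simp [vF, hk]
    · simp
  rw [hsum, hsum] at hx
  exact chi_inj (mul_left_cancel₀ hc hx)

/-- `c` is a power of `i` -/
def IsPow (c : ℂ) : Prop := ∃ ℓ : Fin 4, c = Complex.I ^ (ℓ : ℕ)

open Fin.NatCast in
lemma Ipow_mod (k : ℕ) : Complex.I ^ (((k : Fin 4)) : ℕ) = Complex.I ^ k := by
  conv_rhs => rw [← Nat.div_add_mod k 4]
  rw [pow_add, pow_mul, Complex.I_pow_four, one_pow, one_mul, Fin.val_natCast]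

open Fin.NatCast in
lemma isPow_I_pow (k : ℕ) : IsPow (Complex.I ^ k) := ⟨(k : Fin 4), (Ipow_mod k).symm⟩

lemma isPow_one : IsPow 1 := ⟨0, by simp⟩

lemma isPow_mul {c d : ℂ} (hc : IsPow c) (hd : IsPow d) : IsPow (c * d) := by
  obtain ⟨ℓ, rfl⟩ := hc; obtain ⟨m, rfl⟩ := hd
  rw [← pow_add]; exact isPow_I_pow _

lemma isPow_chi (v : ZMod 2) : IsPow (chi v) := by
  rw [chi_eq_I_pow]; exact isPow_I_pow _

lemma isPow_ne_zero {c : ℂ} (hc : IsPow c) : c ≠ 0 := by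
  obtain ⟨ℓ, rfl⟩ := hc
  exact pow_ne_zero _ Complex.I_ne_zero

/-- the stabilizer subgroup, as a subspace of symplectic vectors -/
def stabV {n : ℕ} (ψ : QVec n) : Submodule (ZMod 2) (PV n) where
  carrier := {a | ∃ c : ℂ, IsPow c ∧ (c • PW a) *ᵥ ψ = ψ}
  add_mem' := by
    rintro a b ⟨c, hc, hcψ⟩ ⟨d, hd, hdψ⟩
    refine ⟨c * d * chi (beta a b), isPow_mul (isPow_mul hc hd) (isPow_chi _), ?_⟩
    have : ((c * d * chi (beta a b)) • PW (a + b)) = (c • PW a) * (d • PW b) := by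
      rw [smul_mul_smul_comm, PW_mul, smul_smul]
    rw [this, ← Matrix.mulVec_mulVec, hdψ, hcψ]
  zero_mem' := ⟨1, isPow_one, by rw [PW_zero, one_smul, Matrix.one_mulVec]⟩
  smul_mem' := by
    intro c a ha
    rcases zmod2_cases c with h | h <;> subst h
    · simpa using (⟨1, isPow_one, by rw [PW_zero, one_smul, Matrix.one_mulVec]⟩ :
        ∃ c : ℂ, IsPow c ∧ (c • PW (0 : PV _)) *ᵥ _ = _)
    · simpa using ha

lemma mem_stabV {n : ℕ} {ψ : QVec n} {a : PV n} :
    a ∈ stabV ψ ↔ ∃ c : ℂ, IsPow c ∧ (c • PW a) *ᵥ ψ = ψ := Iff.rfl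

/-- symplectic form -/
def omegaF {n : ℕ} (a b : PV n) : ZMod 2 := beta a b + beta b a

lemma PW_comm {n : ℕ} {a b : PV n} (h : omegaF a b = 0) : PW a * PW b = PW b * PW a := by
  rw [PW_mul, PW_mul, add_comm b a]
  have hz : ∀ x y : ZMod 2, x + y = 0 → x = y := by decide
  rw [hz _ _ h]

lemma PW_anticomm {n : ℕ} {a b : PV n} (h : omegaF a b = 1) :
    PW a * PW b = -(PW b * PW a) := by
  rw [PW_mul, PW_mul, add_comm b a]
  have hz : ∀ x y : ZMod 2, x + y = 1 → x = y + 1 := by decide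
  rw [hz _ _ h, chi_add]
  simp [chi]

lemma stabV_isotropic {n : ℕ} {ψ : QVec n} (hψ : ψ ≠ 0) {a b : PV n}
    (ha : a ∈ stabV ψ) (hb : b ∈ stabV ψ) : omegaF a b = 0 := by
  by_contra hne
  have h1 : omegaF a b = 1 := by
    rcases zmod2_cases (omegaF a b) with h | h
    · exact absurd h hne
    · exact h
  obtain ⟨c, hc, hcψ⟩ := ha
  obtain ⟨d, hd, hdψ⟩ := hb
  have hab : ((c • PW a) * (d • PW b)) *ᵥ ψ = ψ := by
    rw [← Matrix.mulVec_mulVec, hdψ, hcψ]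
  have hba : ((d • PW b) * (c • PW a)) *ᵥ ψ = ψ := by
    rw [← Matrix.mulVec_mulVec, hcψ, hdψ]
  have : ((c • PW a) * (d • PW b)) = -((d • PW b) * (c • PW a)) := by
    rw [smul_mul_smul_comm, smul_mul_smul_comm, PW_anticomm h1, mul_comm d c]
    simp
  rw [this] at hab
  rw [Matrix.neg_mulVec, hba] at hab
  have : (2 : ℂ) • ψ = 0 := by
    have := congrArg (fun v => v + ψ) hab
    simpa [two_smul] using this.symm
  exact hψ (by simpa [smul_eq_zero] using this)


/-- the standard Pauli matrix attached to (x, z) -/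
def stdQ (x z : ZMod 2) : Matrix (Fin 2) (Fin 2) ℂ :=
  if x = 0 then (if z = 0 then 1 else PauliZ) else (if z = 0 then PauliX else PauliY)

lemma stdQ_single (x z : ZMod 2) : IsSingleQubitPauli (stdQ x z) := by
  rcases zmod2_cases x with h | h <;> rcases zmod2_cases z with h' | h' <;>
    simp [h, h', stdQ, IsSingleQubitPauli]

lemma sPauli_eq_one : sPauli 0 0 = 1 := sPauli_one

lemma sPauli_eq_X : sPauli 1 0 = PauliX := by
  ext a b; fin_cases a <;> fin_cases b <;>
    simp [sPauli, chi, vF, PauliX] <;> decide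

lemma sPauli_eq_Z : sPauli 0 1 = PauliZ := by
  ext a b; fin_cases a <;> fin_cases b <;>
    simp [sPauli, chi, vF, PauliZ, two_eq_zero'] <;> decide

lemma sPauli_eq_Y : Complex.I • sPauli 1 1 = PauliY := by
  ext a b; fin_cases a <;> fin_cases b <;>
    simp [sPauli, chi, vF, PauliY, two_eq_zero'] <;> norm_num <;> decide

lemma stdQ_eq_smul (x z : ZMod 2) :
    stdQ x z = (Complex.I ^ (x.val * z.val)) • sPauli x z := by
  rcases zmod2_cases x with h | h <;> rcases zmod2_cases z with h' | h' <;>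
    subst h h' <;>
    simp [stdQ, ZMod.val_one, sPauli_eq_one, sPauli_eq_X, sPauli_eq_Z, ← sPauli_eq_Y]

lemma one_ne_X : (1 : Matrix (Fin 2) (Fin 2) ℂ) ≠ PauliX := by
  intro h
  have := congrFun (congrFun h 0) 0
  simp [PauliX, Matrix.one_apply] at this

lemma one_ne_Y : (1 : Matrix (Fin 2) (Fin 2) ℂ) ≠ PauliY := by
  intro h
  have := congrFun (congrFun h 0) 0
  simp [PauliY, Matrix.one_apply] at this

lemma one_ne_Z : (1 : Matrix (Fin 2) (Fin 2) ℂ) ≠ PauliZ := by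
  intro h
  have := congrFun (congrFun h 1) 1
  simp [PauliZ, Matrix.one_apply] at this
  norm_num at this

lemma stdQ_eq_one_iff (x z : ZMod 2) : stdQ x z = 1 ↔ (x = 0 ∧ z = 0) := by
  rcases zmod2_cases x with h | h <;> rcases zmod2_cases z with h' | h' <;>
    subst h h' <;>
    simp [stdQ, one_ne_X.symm, one_ne_Y.symm, one_ne_Z.symm]

/-- `tensorn` of the standard Paulis equals a phase times `PW`. -/
lemma tensorn_stdQ {n : ℕ} (a : PV n) :
    ∃ k : ℕ, tensorn n (fun j => stdQ (a.1 j) (a.2 j)) = (Complex.I ^ k) • PW a := by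
  refine ⟨∑ j, (a.1 j).val * (a.2 j).val, ?_⟩
  have : (fun j => stdQ (a.1 j) (a.2 j)) =
      fun j => (Complex.I ^ ((a.1 j).val * (a.2 j).val)) • sPauli (a.1 j) (a.2 j) := by
    funext j; exact stdQ_eq_smul _ _
  rw [this, tensorn_smul, Finset.prod_pow_eq_pow_sum]
  rfl

/-- `PW a` equals a phase times a standard Pauli word. -/
lemma PW_eq_std {n : ℕ} (a : PV n) :
    ∃ (c : ℂ), IsPow c ∧ PW a = c • tensorn n (fun j => stdQ (a.1 j) (a.2 j)) := by
  obtain ⟨k, hk⟩ := tensorn_stdQ a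
  refine ⟨Complex.I ^ (3 * k), isPow_I_pow _, ?_⟩
  rw [hk, smul_smul, ← pow_add]
  have : 3 * k + k = 4 * k := by ring
  rw [this, pow_mul, Complex.I_pow_four, one_pow, one_smul]

lemma isPauli_iff {n : ℕ} (P : QMat n) :
    IsPauli P ↔ ∃ (a : PV n) (c : ℂ), IsPow c ∧ P = c • PW a := by
  constructor
  · rintro ⟨ℓ, Q, hQ, rfl⟩
    have hj : ∀ j, ∃ (x z : ZMod 2) (k : ℕ), Q j = (Complex.I ^ k) • sPauli x z := by
      intro j
      rcases hQ j with h | h | h | h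
      · exact ⟨0, 0, 0, by simp [h, sPauli_eq_one]⟩
      · exact ⟨1, 0, 0, by simp [h, sPauli_eq_X]⟩
      · exact ⟨1, 1, 1, by simp [h, ← sPauli_eq_Y]⟩
      · exact ⟨0, 1, 0, by simp [h, sPauli_eq_Z]⟩
    choose x z k hk using hj
    refine ⟨(x, z), Complex.I ^ (ℓ : ℕ) * Complex.I ^ (∑ j, k j),
      isPow_mul (isPow_I_pow _) (isPow_I_pow _), ?_⟩
    have : Q = fun j => (Complex.I ^ (k j)) • sPauli (x j) (z j) := funext hk
    rw [this, tensorn_smul, Finset.prod_pow_eq_pow_sum, smul_smul]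
    rfl
  · rintro ⟨a, c, hc, rfl⟩
    obtain ⟨d, hd, hda⟩ := PW_eq_std a
    obtain ⟨ℓ, hℓ⟩ := isPow_mul hc hd
    refine ⟨ℓ, fun j => stdQ (a.1 j) (a.2 j), fun j => stdQ_single _ _, ?_⟩
    rw [hda, smul_smul, ← hℓ]

/-- `PW a` is itself a Pauli operator. -/
lemma isPauli_PW {n : ℕ} (a : PV n) : IsPauli (PW a) :=
  (isPauli_iff _).2 ⟨a, 1, isPow_one, (one_smul _ _).symm⟩


lemma chi_mul_self (v : ZMod 2) : chi v * chi v = 1 := by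
  rcases zmod2_cases v with h | h <;> simp [h, chi]

section Clifford

variable {n : ℕ} {C : QMat n} (hC : IsClifford C)
include hC

lemma cliff_exists (a : PV n) : ∃ (b : PV n) (c : ℂ), IsPow c ∧
    C * PW a * Cᴴ = c • PW b :=
  (isPauli_iff _).1 (hC.2 (PW a) (isPauli_PW a))

lemma C_mul_Ch : C * Cᴴ = 1 := (Matrix.mem_unitaryGroup_iff).1 hC.1

lemma Ch_mul_C : Cᴴ * C = 1 := (Matrix.mem_unitaryGroup_iff').1 hC.1

/-- the induced symplectic map of a Clifford unitary -/
def cliffF : PV n → PV n := fun a => (cliff_exists hC a).choose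

lemma cliffF_spec (a : PV n) : ∃ c : ℂ, IsPow c ∧
    C * PW a * Cᴴ = c • PW (cliffF hC a) :=
  (cliff_exists hC a).choose_spec

lemma cliffF_add (a b : PV n) :
    cliffF hC (a + b) = cliffF hC a + cliffF hC b := by
  obtain ⟨ca, hca, ha⟩ := cliffF_spec hC a
  obtain ⟨cb, hcb, hb⟩ := cliffF_spec hC b
  obtain ⟨cab, hcab, hab⟩ := cliffF_spec hC (a + b)
  have key : C * PW (a + b) * Cᴴ =
      (chi (beta a b) * (ca * cb * chi (beta (cliffF hC a) (cliffF hC b)))) •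
        PW (cliffF hC a + cliffF hC b) := by
    have h1 : C * PW (a + b) * Cᴴ = chi (beta a b) • ((C * PW a * Cᴴ) * (C * PW b * Cᴴ)) := by
      have : (C * PW a * Cᴴ) * (C * PW b * Cᴴ) = C * (PW a * PW b) * Cᴴ := by
        calc (C * PW a * Cᴴ) * (C * PW b * Cᴴ) = C * PW a * (Cᴴ * C) * PW b * Cᴴ := by
              noncomm_ring
          _ = C * (PW a * PW b) * Cᴴ := by rw [Ch_mul_C hC]; noncomm_ring
      rw [this, PW_mul a b, Matrix.mul_smul, Matrix.smul_mul, smul_smul, chi_mul_self, one_smul]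
    rw [h1, ha, hb, Matrix.smul_mul, Matrix.mul_smul, smul_smul, PW_mul, smul_smul, smul_smul]
    congr 1
    ring
  rw [hab] at key
  exact (PW_smul_inj (isPow_ne_zero hcab) key).1

lemma cliffF_inj : Function.Injective (cliffF hC) := by
  intro a b hab
  obtain ⟨ca, hca, ha⟩ := cliffF_spec hC a
  obtain ⟨cb, hcb, hb⟩ := cliffF_spec hC b
  rw [hab] at ha
  have h1 : cb • (C * PW a * Cᴴ) = ca • (C * PW b * Cᴴ) := by
    rw [ha, hb, smul_smul, smul_smul, mul_comm]
  have e : ∀ M : QMat n, Cᴴ * (C * M * Cᴴ) * C = M := by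
    intro M
    calc Cᴴ * (C * M * Cᴴ) * C = (Cᴴ * C) * M * (Cᴴ * C) := by noncomm_ring
      _ = M := by rw [Ch_mul_C hC]; simp
  have h2 : cb • PW a = ca • PW b := by
    have h3 := congrArg (fun M => Cᴴ * M * C) h1
    simp only [Matrix.mul_smul, Matrix.smul_mul] at h3
    rw [e, e] at h3
    exact h3
  exact (PW_smul_inj (isPow_ne_zero hcb) h2).1

/-- the induced symplectic map as a linear map -/
def cliffL : PV n →ₗ[ZMod 2] PV n :=
  AddMonoidHom.toZModLinearMap 2 (AddMonoidHom.mk' (cliffF hC) (cliffF_add hC))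

lemma cliff_step (ψ : QVec n) :
    Submodule.map (cliffL hC) (stabV ψ) ≤ stabV (C *ᵥ ψ) := by
  rintro _ ⟨a, ⟨c, hc, hcψ⟩, rfl⟩
  obtain ⟨d, hd, hda⟩ := cliffF_spec hC a
  refine ⟨d * c, isPow_mul hd hc, ?_⟩
  have : ((d * c) • PW (cliffF hC a)) = C * (c • PW a) * Cᴴ := by
    rw [Matrix.mul_smul, Matrix.smul_mul, hda, smul_smul, mul_comm c d]
  show ((d * c) • PW ((cliffL hC) a)) *ᵥ (C *ᵥ ψ) = C *ᵥ ψ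
  have hcl : (cliffL hC) a = cliffF hC a := rfl
  rw [hcl, this, Matrix.mulVec_mulVec]
  have e2 : (C * (c • PW a) * Cᴴ) * C = C * (c • PW a) := by
    rw [Matrix.mul_assoc (C * (c • PW a)) Cᴴ C, Ch_mul_C hC, Matrix.mul_one]
  rw [e2, ← Matrix.mulVec_mulVec, hcψ]

lemma cliff_finrank (ψ : QVec n) :
    Module.finrank (ZMod 2) (stabV ψ) ≤ Module.finrank (ZMod 2) (stabV (C *ᵥ ψ)) := by
  have h1 : Module.finrank (ZMod 2) (Submodule.map (cliffL hC) (stabV ψ)) =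
      Module.finrank (ZMod 2) (stabV ψ) :=
    (Submodule.equivMapOfInjective _ (cliffF_inj hC) _).symm.finrank_eq
  rw [← h1]
  exact Submodule.finrank_mono (cliff_step hC ψ)

end Clifford


/-- pairing with a fixed vector as a linear functional -/
def omegaL {n : ℕ} (p : PV n) : PV n →ₗ[ZMod 2] ZMod 2 :=
  AddMonoidHom.toZModLinearMap 2 (AddMonoidHom.mk' (fun a => omegaF a p) (by
    intro a b
    simp [omegaF, beta, add_mul, mul_add, Finset.sum_add_distrib]
    abel))

lemma omegaL_apply {n : ℕ} (p a : PV n) : omegaL p a = omegaF a p := rfl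

lemma rot_finrank {n : ℕ} {R : QMat n} (hR : IsPauliRotation R) (ψ : QVec n) :
    Module.finrank (ZMod 2) (stabV ψ) ≤
      Module.finrank (ZMod 2) (stabV (R *ᵥ ψ)) + 1 := by
  obtain ⟨θ, P, hP, rfl⟩ := hR
  obtain ⟨p, c, hc, rfl⟩ := (isPauli_iff P).1 hP
  set S := stabV ψ
  set φ := omegaL p
  set D := φ.domRestrict S with hD
  -- elements of the kernel stabilize the rotated state
  have key : ∀ a : PV n, a ∈ S → φ a = 0 →
      a ∈ stabV ((NormedSpace.exp ((((θ : ℂ) * Complex.I)) • (c • PW p))) *ᵥ ψ) := by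
    intro a haS haK
    obtain ⟨c', hc', hstab⟩ := haS
    refine ⟨c', hc', ?_⟩
    have hcomm : Commute (c' • PW a)
        ((((θ : ℂ) * Complex.I)) • (c • PW p)) := by
      have h0 : Commute (PW a) (PW p) := PW_comm (by rw [← omegaL_apply]; exact haK)
      exact ((h0.smul_left c').smul_right c).smul_right _
    have hcomm2 := hcomm.exp_right
    set E := NormedSpace.exp ((((θ : ℂ) * Complex.I)) • (c • PW p))
    calc (c' • PW a) *ᵥ (E *ᵥ ψ) = ((c' • PW a) * E) *ᵥ ψ := Matrix.mulVec_mulVec _ _ _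
      _ = (E * (c' • PW a)) *ᵥ ψ := by rw [hcomm2]
      _ = E *ᵥ ((c' • PW a) *ᵥ ψ) := (Matrix.mulVec_mulVec _ _ _).symm
      _ = E *ᵥ ψ := by rw [hstab]
  -- rank counting
  have h1 := LinearMap.finrank_range_add_finrank_ker D
  have h2 : Module.finrank (ZMod 2) (LinearMap.range D) ≤ 1 := by
    have := Submodule.finrank_le (LinearMap.range D)
    simpa [Module.finrank_self] using this
  set ι := ((S.subtype).comp (LinearMap.ker D).subtype) with hι
  have hinj : Function.Injective ι :=
    (Submodule.injective_subtype S).comp (Submodule.injective_subtype _)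
  have hrange : LinearMap.range ι ≤
      stabV ((NormedSpace.exp ((((θ : ℂ) * Complex.I)) • (c • PW p))) *ᵥ ψ) := by
    rintro _ ⟨⟨⟨a, haS⟩, haK⟩, rfl⟩
    exact key a haS (by simpa [hD, LinearMap.mem_ker] using haK)
  have h3 : Module.finrank (ZMod 2) (LinearMap.ker D) ≤
      Module.finrank (ZMod 2)
        (stabV ((NormedSpace.exp ((((θ : ℂ) * Complex.I)) • (c • PW p))) *ᵥ ψ)) := by
    rw [← LinearMap.finrank_range_of_inj hinj]
    exact Submodule.finrank_mono hrange
  omega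


lemma PW_z_stab_e0 {n : ℕ} (z : Fin n → ZMod 2) :
    PW ((0 : Fin n → ZMod 2), z) *ᵥ e0 n = e0 n := by
  funext x
  have hstep : (PW ((0 : Fin n → ZMod 2), z) *ᵥ e0 n) x = PW (0, z) x (fun _ => 0) := by
    rw [Matrix.mulVec]
    simp only [dotProduct, e0, mul_ite, mul_one, mul_zero]
    rw [Finset.sum_ite_eq' Finset.univ (fun _ => 0) (fun y => PW ((0 : Fin n → ZMod 2), z) x y)]
    simp
  rw [hstep]
  by_cases h : x = (fun _ => 0)
  · subst h
    rw [PW_apply_eq (((0 : Fin n → ZMod 2), z)) _ _ (fun j => by simp [vF])]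
    simp [e0, vF, chi]
  · obtain ⟨j, hj⟩ : ∃ j, x j ≠ 0 := by
      by_contra hc; push_neg at hc; exact h (funext hc)
    rw [PW_apply_ne (((0 : Fin n → ZMod 2), z)) _ _ j (by
      simp only [vF]
      intro hcon
      exact hj (vF_inj (show vF (x j) = vF 0 by simpa [vF] using hcon)))]
    simp [e0, h]

lemma finrank_stabV_e0 {n : ℕ} : n ≤ Module.finrank (ZMod 2) (stabV (e0 n)) := by
  set f : (Fin n → ZMod 2) →ₗ[ZMod 2] PV n := LinearMap.inr (ZMod 2) _ _
  have hrange : LinearMap.range f ≤ stabV (e0 n) := by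
    rintro _ ⟨z, rfl⟩
    exact ⟨1, isPow_one, by rw [one_smul]; exact PW_z_stab_e0 z⟩
  have h1 : Module.finrank (ZMod 2) (LinearMap.range f) = n := by
    rw [LinearMap.finrank_range_of_inj LinearMap.inr_injective, Module.finrank_pi]
    simp
  have h2 := Submodule.finrank_mono (t := stabV (e0 n)) hrange
  rw [h1] at h2
  exact h2


lemma prepared_finrank {n t : ℕ} {ψ : QVec n} (h : PreparedBy t ψ) :
    n - t ≤ Module.finrank (ZMod 2) (stabV ψ) := by
  obtain ⟨s, hst, C, R, v, hC, hR, hv0, hvstep, rfl⟩ := h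
  have key : ∀ j, j ≤ s → n - j ≤ Module.finrank (ZMod 2) (stabV (v j)) := by
    intro j
    induction j with
    | zero =>
      intro _
      rw [hv0]
      have h1 := cliff_finrank (hC 0 (Nat.zero_le s)) (e0 n)
      have h2 := finrank_stabV_e0 (n := n)
      omega
    | succ j ih =>
      intro hj
      have hj' : j ≤ s := Nat.le_of_succ_le hj
      have h0 := ih hj'
      have h1 := rot_finrank (hR (j + 1) (Nat.succ_le_succ (Nat.zero_le j)) hj) (v j)
      have h2 := cliff_finrank (hC (j + 1) hj) ((R (j + 1)) *ᵥ v j)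
      rw [hvstep j (Nat.lt_of_succ_le hj)]
      omega
  have := key s le_rfl
  omega

section Count

variable {ι : Type*} [Fintype ι] [DecidableEq ι]

abbrev SV (ι : Type*) := (ι → ZMod 2) × (ι → ZMod 2)

def BF : LinearMap.BilinForm (ZMod 2) (SV ι) :=
  LinearMap.mk₂ (ZMod 2) (fun a b => ∑ i, (a.2 i * b.1 i + b.2 i * a.1 i))
    (by intro a a' b
        simp only [Prod.fst_add, Prod.snd_add, Pi.add_apply, add_mul, mul_add]
        rw [← Finset.sum_add_distrib]
        exact Finset.sum_congr rfl (fun i _ => by ring)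
    )
    (by intro c a b
        simp only [Prod.smul_fst, Prod.smul_snd, Pi.smul_apply, smul_eq_mul]
        rw [Finset.mul_sum]
        exact Finset.sum_congr rfl (fun i _ => by ring)
    )
    (by intro a b b'
        simp only [Prod.fst_add, Prod.snd_add, Pi.add_apply, add_mul, mul_add]
        rw [← Finset.sum_add_distrib]
        exact Finset.sum_congr rfl (fun i _ => by ring)
    )
    (by intro c a b
        simp only [Prod.smul_fst, Prod.smul_snd, Pi.smul_apply, smul_eq_mul]
        rw [Finset.mul_sum]
        exact Finset.sum_congr rfl (fun i _ => by ring)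
    )

lemma BF_apply (a b : SV ι) : BF a b = ∑ i, (a.2 i * b.1 i + b.2 i * a.1 i) := rfl

lemma BF_symm (a b : SV ι) : BF a b = BF b a := by
  rw [BF_apply, BF_apply]
  exact Finset.sum_congr rfl (fun i _ => by ring)

lemma BF_refl : LinearMap.BilinForm.IsRefl (BF (ι := ι)) := by
  intro a b h
  rw [BF_symm]
  exact h

lemma BF_nondeg : (BF (ι := ι)).orthogonal ⊤ = ⊥ := by
  ext m
  simp only [Submodule.mem_bot]
  constructor
  · intro hm
    have key : ∀ nn : SV ι, BF nn m = 0 := fun nn =>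
      (LinearMap.BilinForm.mem_orthogonal_iff.1 hm) nn trivial
    have h1 : ∀ i, m.2 i = 0 := by
      intro i
      have := key ((Pi.single i 1 : ι → ZMod 2), 0)
      simpa [BF_apply, Pi.single_apply, mul_ite, Finset.sum_ite_eq'] using this
    have h2 : ∀ i, m.1 i = 0 := by
      intro i
      have := key ((0 : ι → ZMod 2), (Pi.single i 1 : ι → ZMod 2))
      simpa [BF_apply, Pi.single_apply, ite_mul, Finset.sum_ite_eq'] using this
    exact Prod.ext (funext h2) (funext h1)
  · rintro rfl
    exact (BF (ι := ι)).orthogonal ⊤ |>.zero_mem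

lemma isotropic_le {U : Submodule (ZMod 2) (SV ι)}
    (hU : ∀ a ∈ U, ∀ b ∈ U, BF a b = 0) :
    Module.finrank (ZMod 2) U ≤ Fintype.card ι := by
  have hle : U ≤ (BF (ι := ι)).orthogonal U := by
    intro m hm
    exact LinearMap.BilinForm.mem_orthogonal_iff.2 (fun nn hn => hU nn hn m hm)
  have heq := LinearMap.BilinForm.finrank_add_finrank_orthogonal BF_refl U
  rw [BF_nondeg] at heq
  have hbot : U ⊓ (⊥ : Submodule (ZMod 2) (SV ι)) = ⊥ := inf_bot_eq U
  rw [hbot, finrank_bot, add_zero] at heq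
  have hdim : Module.finrank (ZMod 2) (SV ι) = Fintype.card ι + Fintype.card ι := by
    rw [Module.finrank_prod, Module.finrank_pi]
  have hmono := Submodule.finrank_mono hle
  omega

end Count


/-- if `ψ` is prepared by Clifford gates plus at most `t` Pauli-rotation
gates, then at least `n - t` qubits are acted on non-trivially by some element of
`stab(ψ)`. -/
theorem many_nontrivially_stabilized_qubits (n t : ℕ) (ψ : QVec n)
    (hunit : star ψ ⬝ᵥ ψ = 1) (hprep : PreparedBy t ψ) :
    n - t ≤ Set.ncard {i : Fin n | ∃ (ℓ : Fin 4) (Q : Fin n → Matrix (Fin 2) (Fin 2) ℂ),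
      (∀ j, IsSingleQubitPauli (Q j)) ∧
      ((Complex.I ^ (ℓ : ℕ)) • tensorn n Q) *ᵥ ψ = ψ ∧ Q i ≠ 1} := by
  classical
  set T := {i : Fin n | ∃ (ℓ : Fin 4) (Q : Fin n → Matrix (Fin 2) (Fin 2) ℂ),
      (∀ j, IsSingleQubitPauli (Q j)) ∧
      ((Complex.I ^ (ℓ : ℕ)) • tensorn n Q) *ᵥ ψ = ψ ∧ Q i ≠ 1} with hT
  have hψ0 : ψ ≠ 0 := by
    rintro rfl
    simp at hunit
  -- support of stabilizer vectors is contained in T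
  have hsupp : ∀ a ∈ stabV ψ, ∀ i, i ∉ T → a.1 i = 0 ∧ a.2 i = 0 := by
    intro a ha i hi
    by_contra hcon
    apply hi
    obtain ⟨c, hc, hstab⟩ := ha
    obtain ⟨d, hd, hda⟩ := PW_eq_std a
    obtain ⟨ℓ, hℓ⟩ := isPow_mul hc hd
    refine ⟨ℓ, fun j => stdQ (a.1 j) (a.2 j), fun j => stdQ_single _ _, ?_, ?_⟩
    · rw [← hℓ, mul_smul, ← hda]
      exact hstab
    · rw [Ne, stdQ_eq_one_iff]
      exact hcon
  -- restriction map to T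
  haveI : Fintype ↥T := Set.Finite.fintype (Set.toFinite T)
  set ρ : PV n →ₗ[ZMod 2] SV ↥T :=
    LinearMap.prodMap (LinearMap.funLeft (ZMod 2) (ZMod 2) (Subtype.val : ↥T → Fin n))
      (LinearMap.funLeft (ZMod 2) (ZMod 2) (Subtype.val : ↥T → Fin n)) with hρ
  set ρ' : ↥(stabV ψ) →ₗ[ZMod 2] SV ↥T := ρ.comp (stabV ψ).subtype with hρ'
  have hρ'_apply : ∀ x : ↥(stabV ψ),
      ρ' x = (fun i : ↥T => (x : PV n).1 i, fun i : ↥T => (x : PV n).2 i) := fun x => rfl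
  have hinj : Function.Injective ρ' := by
    rw [← LinearMap.ker_eq_bot]
    ext x
    simp only [LinearMap.mem_ker, Submodule.mem_bot]
    constructor
    · intro hx
      have hx' : ∀ i : ↥T, (x : PV n).1 i = 0 ∧ (x : PV n).2 i = 0 := by
        intro i
        have h1 := congrFun (congrArg Prod.fst hx) i
        have h2 := congrFun (congrArg Prod.snd hx) i
        exact ⟨h1, h2⟩
      have : (x : PV n) = 0 := by
        have hall : ∀ i, (x : PV n).1 i = 0 ∧ (x : PV n).2 i = 0 := by
          intro i
          by_cases hi : i ∈ T
          · exact hx' ⟨i, hi⟩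
          · exact hsupp _ x.2 i hi
        exact Prod.ext (funext fun i => (hall i).1) (funext fun i => (hall i).2)
      exact Subtype.ext this
    · rintro rfl
      simp
  -- range of ρ' is isotropic
  have hiso : ∀ u ∈ LinearMap.range ρ', ∀ w ∈ LinearMap.range ρ', BF u w = 0 := by
    rintro _ ⟨⟨a, haS⟩, rfl⟩ _ ⟨⟨b, hbS⟩, rfl⟩
    rw [hρ'_apply, hρ'_apply, BF_apply]
    have hvanish : ∀ i : Fin n, i ∉ T → a.2 i * b.1 i + b.2 i * a.1 i = 0 := by
      intro i hi
      rw [(hsupp a haS i hi).2, (hsupp a haS i hi).1, zero_mul, mul_zero, add_zero]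
    have homega : omegaF a b = 0 := stabV_isotropic hψ0 haS hbS
    have hsum : (∑ i : ↥T, (a.2 i * b.1 i + b.2 i * a.1 i)) =
        ∑ i : Fin n, (a.2 i * b.1 i + b.2 i * a.1 i) := by
      rw [← Finset.sum_subtype T.toFinset (fun x => Set.mem_toFinset)
        (fun i => a.2 i * b.1 i + b.2 i * a.1 i)]
      exact Finset.sum_subset (Finset.subset_univ _)
        (fun i _ hi => hvanish i (by simpa [Set.mem_toFinset] using hi)) |>.symm
      |>.symm
    rw [hsum]
    rw [show (∑ i : Fin n, (a.2 i * b.1 i + b.2 i * a.1 i)) = omegaF a b by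
      rw [omegaF, beta, beta, ← Finset.sum_add_distrib]]
    exact homega
  -- dimension chase
  have hrank1 : Module.finrank (ZMod 2) (LinearMap.range ρ') =
      Module.finrank (ZMod 2) (stabV ψ) := LinearMap.finrank_range_of_inj hinj
  have hrank2 := isotropic_le hiso
  have hprep' := prepared_finrank hprep
  have hcard : Fintype.card ↥T = T.ncard := by
    rw [← Nat.card_coe_set_eq, Nat.card_eq_fintype_card]
  omega
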